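/- Let n ≥ 1, let A₀, A₁, A₂ ⊆ ℝⁿ be measurable sets, and let F₁, F₂ ∈ L²(ℝⁿ) satisfy supp F₁ ⊆ A₁ and supp F₂ ⊆ A₂. Let M = min( sup_{ξ ∈ A₀} |A₁ ∩ (ξ − A₂)|, sup_{ξ ∈ A₂} |A₀ ∩ (ξ + A₁)|, sup_{ξ ∈ A₁} |A₀ ∩ (ξ + A₂)| ), where |·| denotes n-dimensional Lebesgue measure and ξ ± A = {ξ ± η : η ∈ A}. If M < ∞, then (∫_{A₀} |(F₁ * F₂)(ξ)|² dξ)^{1/2} ≤ M^{1/2} ‖F₁‖_{L²(ℝⁿ)} ‖F₂‖_{L²(ℝⁿ)}, where (F₁ * F₂)(ξ) = ∫_{ℝⁿ} F₁(η) F₂(ξ − η) dη. -/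

import Mathlib

open MeasureTheory Set
open scoped ENNReal

noncomputable section

namespace BRVBaux

lemma lint_CS {α : Type*} [MeasurableSpace α] (μ : Measure α) (f g : α → ℝ≥0∞)
    (hf : AEMeasurable f μ) (hg : AEMeasurable g μ) :
    (∫⁻ x, f x * g x ∂μ) ^ (2:ℝ) ≤ (∫⁻ x, f x ^ (2:ℝ) ∂μ) * (∫⁻ x, g x ^ (2:ℝ) ∂μ) := by
  have h := ENNReal.lintegral_mul_le_Lp_mul_Lq μ
    Real.HolderConjugate.two_two hf hg
  simp only [Pi.mul_apply] at h
  calc (∫⁻ x, f x * g x ∂μ) ^ (2:ℝ)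
      ≤ ((∫⁻ x, f x ^ (2:ℝ) ∂μ) ^ ((1:ℝ)/2) * (∫⁻ x, g x ^ (2:ℝ) ∂μ) ^ ((1:ℝ)/2)) ^ (2:ℝ) :=
        ENNReal.rpow_le_rpow h (by norm_num)
    _ = _ := by
        rw [ENNReal.mul_rpow_of_nonneg _ _ (by norm_num), ← ENNReal.rpow_mul,
          ← ENNReal.rpow_mul]
        norm_num

lemma eLp_eq {α : Type*} [MeasurableSpace α] (μ : Measure α) (f : α → ℂ) :
    eLpNorm f 2 μ = (∫⁻ x, (‖f x‖₊ : ℝ≥0∞) ^ (2:ℝ) ∂μ) ^ ((1:ℝ)/2) := by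
  rw [eLpNorm_eq_lintegral_rpow_enorm_toReal (by norm_num) (by norm_num)]
  norm_num
  rfl

variable {n : ℕ}

lemma lint_sub_left (f : EuclideanSpace ℝ (Fin n) → ℝ≥0∞) (a : EuclideanSpace ℝ (Fin n)) :
    ∫⁻ x, f (a - x) = ∫⁻ x, f x := by
  have h1 : ∫⁻ x, f (a - x) = ∫⁻ x, (fun y => f (a + y)) (-x) := by
    simp_rw [sub_eq_add_neg]
  rw [h1]
  have h2 : ∫⁻ x, (fun y => f (a + y)) (-x) = ∫⁻ x, f (a + x) := by
    conv_rhs => rw [← Measure.map_neg_eq_self (volume : Measure (EuclideanSpace ℝ (Fin n)))]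
    exact (lintegral_map_equiv (fun y => f (a + y)) (MeasurableEquiv.neg _)).symm
  rw [h2, lintegral_add_left_eq_self]

end BRVBaux

open BRVBaux

/-- The general bilinear L² Fourier restriction estimate via volumes of intersections
of translates (Lemma B:Lemma1). -/
theorem bilinear_restriction_volume_bound
    (n : ℕ) (hn : 1 ≤ n)
    (A₀ A₁ A₂ : Set (EuclideanSpace ℝ (Fin n)))
    (hA₀ : MeasurableSet A₀) (hA₁ : MeasurableSet A₁) (hA₂ : MeasurableSet A₂)
    (F₁ F₂ : EuclideanSpace ℝ (Fin n) → ℂ)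
    (hF₁ : MemLp F₁ 2 volume) (hF₂ : MemLp F₂ 2 volume)
    (hsupp₁ : Function.support F₁ ⊆ A₁)
    (hsupp₂ : Function.support F₂ ⊆ A₂)
    (M : ℝ≥0∞)
    (hM : M = min (min
        (⨆ ξ ∈ A₀, volume (A₁ ∩ ((fun η => ξ - η) '' A₂)))
        (⨆ ξ ∈ A₂, volume (A₀ ∩ ((fun η => ξ + η) '' A₁))))
        (⨆ ξ ∈ A₁, volume (A₀ ∩ ((fun η => ξ + η) '' A₂))))
    (hMfin : M ≠ ⊤) :
    eLpNorm (Set.indicator A₀ (fun ξ => ∫ η, F₁ η * F₂ (ξ - η))) 2 volume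
      ≤ M ^ ((1 : ℝ) / 2) * eLpNorm F₁ 2 volume * eLpNorm F₂ 2 volume := by
  classical
  have h₁m := hF₁.1.enorm
  have h₂m := hF₂.1.enorm
  set g₁ : EuclideanSpace ℝ (Fin n) → ℝ≥0∞ := A₁.indicator (h₁m.mk _) with hg₁def
  set g₂ : EuclideanSpace ℝ (Fin n) → ℝ≥0∞ := A₂.indicator (h₂m.mk _) with hg₂def
  have hg₁m : Measurable g₁ := h₁m.measurable_mk.indicator hA₁
  have hg₂m : Measurable g₂ := h₂m.measurable_mk.indicator hA₂
  have hg₁ : g₁ =ᵐ[volume] fun x => (‖F₁ x‖₊ : ℝ≥0∞) := by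
    filter_upwards [h₁m.ae_eq_mk] with x hx
    by_cases h : x ∈ A₁
    · simp only [hg₁def, indicator_of_mem h, ← hx]; rfl
    · have h0 : F₁ x = 0 := by
        by_contra h0; exact h (hsupp₁ h0)
      simp [hg₁def, indicator_of_notMem h, h0]
  have hg₂ : g₂ =ᵐ[volume] fun x => (‖F₂ x‖₊ : ℝ≥0∞) := by
    filter_upwards [h₂m.ae_eq_mk] with x hx
    by_cases h : x ∈ A₂
    · simp only [hg₂def, indicator_of_mem h, ← hx]; rfl
    · have h0 : F₂ x = 0 := by
        by_contra h0; exact h (hsupp₂ h0)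
      simp [hg₂def, indicator_of_notMem h, h0]
  have hg₁supp : ∀ x, x ∉ A₁ → g₁ x = 0 := fun x hx => indicator_of_notMem hx _
  have hg₂supp : ∀ x, x ∉ A₂ → g₂ x = 0 := fun x hx => indicator_of_notMem hx _
  set c₁ := ∫⁻ x, g₁ x ^ (2:ℝ) with hc₁def
  set c₂ := ∫⁻ x, g₂ x ^ (2:ℝ) with hc₂def
  have hn₁ : eLpNorm F₁ 2 volume = c₁ ^ ((1:ℝ)/2) := by
    rw [eLp_eq]
    congr 1
    exact (lintegral_congr_ae (hg₁.mono fun x hx => by rw [hx])).symm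
  have hn₂ : eLpNorm F₂ 2 volume = c₂ ^ ((1:ℝ)/2) := by
    rw [eLp_eq]
    congr 1
    exact (lintegral_congr_ae (hg₂.mono fun x hx => by rw [hx])).symm
  set K : EuclideanSpace ℝ (Fin n) → ℝ≥0∞ := fun ξ => ∫⁻ η, g₁ η * g₂ (ξ - η) with hKdef
  -- the three suprema
  set S₁ := ⨆ ξ ∈ A₀, volume (A₁ ∩ ((fun η => ξ - η) '' A₂)) with hS₁def
  set S₂ := ⨆ ξ ∈ A₂, volume (A₀ ∩ ((fun η => ξ + η) '' A₁)) with hS₂def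
  set S₃ := ⨆ ξ ∈ A₁, volume (A₀ ∩ ((fun η => ξ + η) '' A₂)) with hS₃def
  -- pointwise domination of the convolution by K
  have hae₂ : ∀ ξ, (fun η => g₂ (ξ - η)) =ᵐ[volume] fun η => (‖F₂ (ξ - η)‖₊ : ℝ≥0∞) :=
    fun ξ => (Measure.measurePreserving_sub_left volume ξ).quasiMeasurePreserving.ae_eq hg₂
  have hK : ∀ ξ, (‖(A₀.indicator (fun ξ => ∫ η, F₁ η * F₂ (ξ - η)) ξ)‖₊ : ℝ≥0∞)
      ≤ A₀.indicator K ξ := by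
    intro ξ
    by_cases h : ξ ∈ A₀
    · rw [indicator_of_mem h, indicator_of_mem h]
      refine le_trans (enorm_integral_le_lintegral_enorm _) (le_of_eq ?_)
      refine lintegral_congr_ae ?_
      filter_upwards [hg₁, hae₂ ξ] with η h1 h2
      rw [h1, h2, ← ENNReal.coe_mul, ← nnnorm_mul]; rfl
    · simp [indicator_of_notMem h]
  -- image sets as preimages
  have himg2 : ∀ ξ, (fun η => ξ - η) '' A₂ = (fun η => ξ - η) ⁻¹' A₂ := by
    intro ξ; ext η; constructor
    · rintro ⟨a, ha, rfl⟩; simpa [sub_sub_cancel] using ha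
    · intro h; exact ⟨ξ - η, h, sub_sub_cancel ξ η⟩
  have hvol : ∀ (B : Set (EuclideanSpace ℝ (Fin n))), MeasurableSet B →
      ∀ ζ : EuclideanSpace ℝ (Fin n),
      ∫⁻ ξ, A₀.indicator 1 ξ * B.indicator 1 (ξ - ζ)
        = volume (A₀ ∩ ((fun η => ζ + η) '' B)) := by
    intro B hB ζ
    have himg : (fun η => ζ + η) '' B = (fun ξ => ξ - ζ) ⁻¹' B := by
      ext ξ; constructor
      · rintro ⟨a, ha, rfl⟩; simpa [add_sub_cancel_left] using ha
      · intro h; exact ⟨ξ - ζ, h, by show ζ + (ξ - ζ) = ξ; rw [add_sub_cancel]⟩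
    rw [himg, ← lintegral_indicator_one (hA₀.inter ((measurable_sub_const ζ) hB))]
    refine lintegral_congr fun ξ => ?_
    by_cases h0 : ξ ∈ A₀ <;> by_cases hb : ξ - ζ ∈ B <;>
      simp [Set.indicator_apply, h0, hb]
  set L := ∫⁻ ξ, (A₀.indicator K ξ) ^ (2:ℝ) with hLdef
  -- generic bound of L by indicator-dominated integrand
  have hLbound : ∀ D : EuclideanSpace ℝ (Fin n) → ℝ≥0∞,
      (∀ ξ ∈ A₀, K ξ ^ (2:ℝ) ≤ D ξ) →
      L ≤ ∫⁻ ξ, A₀.indicator 1 ξ * D ξ := by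
    intro D hD
    refine lintegral_mono fun ξ => ?_
    by_cases h : ξ ∈ A₀
    · simpa [indicator_of_mem h] using hD ξ h
    · simp [indicator_of_notMem h, ENNReal.zero_rpow_of_pos (by norm_num : (0:ℝ) < 2)]
  ------------------------------------------------------------------
  -- Case 1
  ------------------------------------------------------------------
  have hL1 : L ≤ S₁ * (c₁ * c₂) := by
    have hpre : ∀ ξ : EuclideanSpace ℝ (Fin n),
        MeasurableSet ((fun η => ξ - η) ⁻¹' A₂ : Set (EuclideanSpace ℝ (Fin n))) :=
      fun ξ => (measurable_const.sub measurable_id) hA₂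
    set W : EuclideanSpace ℝ (Fin n) → ℝ≥0∞ :=
      fun ξ => ∫⁻ η, g₁ η ^ (2:ℝ) * g₂ (ξ - η) ^ (2:ℝ) with hWdef
    have hWum : Measurable (Function.uncurry
        fun ξ η => g₁ η ^ (2:ℝ) * g₂ (ξ - η) ^ (2:ℝ)) :=
      (((hg₁m.comp measurable_snd).pow_const _).mul
        (((hg₂m.comp (measurable_fst.sub measurable_snd)).pow_const _)))
    have hWm : Measurable W := hWum.lintegral_prod_right'
    have hcase1 : ∀ ξ ∈ A₀, K ξ ^ (2:ℝ) ≤ S₁ * W ξ := by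
      intro ξ hξ
      set T := A₁ ∩ ((fun η => ξ - η) ⁻¹' A₂) with hTdef
      have hT : MeasurableSet T := hA₁.inter (hpre ξ)
      have hpt : ∀ η, g₁ η * g₂ (ξ - η) = T.indicator 1 η * (g₁ η * g₂ (ξ - η)) := by
        intro η
        by_cases h1 : η ∈ A₁
        · by_cases h2 : ξ - η ∈ A₂
          · simp [hTdef, Set.indicator_apply, h1, h2]
          · simp [hg₂supp _ h2]
        · simp [hg₁supp _ h1]
      have hCS := lint_CS volume (fun η => T.indicator 1 η)
        (fun η => g₁ η * g₂ (ξ - η)) (measurable_one.indicator hT).aemeasurable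
        ((hg₁m.mul (hg₂m.comp (measurable_const.sub measurable_id)))).aemeasurable
      have h1 : ∫⁻ η, (T.indicator 1 η : ℝ≥0∞) ^ (2:ℝ) = volume T := by
        rw [← lintegral_indicator_one hT]
        refine lintegral_congr fun η => ?_
        by_cases h : η ∈ T <;>
          simp [Set.indicator_apply, h, ENNReal.zero_rpow_of_pos (by norm_num : (0:ℝ) < 2)]
      have h2 : (∫⁻ η, (g₁ η * g₂ (ξ - η)) ^ (2:ℝ)) = W ξ := by
        refine lintegral_congr fun η => ?_
        rw [ENNReal.mul_rpow_of_nonneg _ _ (by norm_num)]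
      have hvolT : volume T ≤ S₁ := by
        rw [hS₁def]
        refine le_trans (le_of_eq ?_) (le_iSup₂ (f := fun ξ _ =>
          volume (A₁ ∩ ((fun η => ξ - η) '' A₂))) ξ hξ)
        rw [himg2 ξ]
      calc K ξ ^ (2:ℝ) = (∫⁻ η, T.indicator 1 η * (g₁ η * g₂ (ξ - η))) ^ (2:ℝ) := by
            rw [hKdef]; exact congrArg (· ^ (2:ℝ)) (lintegral_congr hpt)
        _ ≤ (∫⁻ η, (T.indicator 1 η : ℝ≥0∞) ^ (2:ℝ)) *
              (∫⁻ η, (g₁ η * g₂ (ξ - η)) ^ (2:ℝ)) := hCS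
        _ = volume T * W ξ := by rw [h1, h2]
        _ ≤ S₁ * W ξ := mul_le_mul_left hvolT _
    have hW : ∫⁻ ξ, W ξ = c₁ * c₂ := by
      rw [hWdef]
      rw [lintegral_lintegral_swap hWum.aemeasurable]
      have hin : ∀ η, ∫⁻ ξ, g₁ η ^ (2:ℝ) * g₂ (ξ - η) ^ (2:ℝ) = g₁ η ^ (2:ℝ) * c₂ := by
        intro η
        have hm : Measurable fun ξ : EuclideanSpace ℝ (Fin n) => g₂ (ξ - η) ^ (2:ℝ) :=
          (hg₂m.comp (measurable_id.sub_const η)).pow_const _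
        rw [lintegral_const_mul _ hm]
        congr 1
        exact lintegral_sub_right_eq_self (fun x => g₂ x ^ (2:ℝ)) η
      rw [lintegral_congr hin, lintegral_mul_const _ (hg₁m.pow_const _)]
    calc L ≤ ∫⁻ ξ, A₀.indicator 1 ξ * (S₁ * W ξ) := hLbound _ hcase1
      _ ≤ ∫⁻ ξ, S₁ * W ξ := lintegral_mono fun ξ => by
            by_cases h : ξ ∈ A₀ <;> simp [Set.indicator_apply, h]
      _ = S₁ * ∫⁻ ξ, W ξ := lintegral_const_mul _ hWm
      _ = S₁ * (c₁ * c₂) := by rw [hW]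
  ------------------------------------------------------------------
  -- Case 2
  ------------------------------------------------------------------
  have hL2 : L ≤ S₂ * (c₁ * c₂) := by
    set V : EuclideanSpace ℝ (Fin n) → ℝ≥0∞ :=
      fun ξ => ∫⁻ η, A₁.indicator 1 η * g₂ (ξ - η) ^ (2:ℝ) with hVdef
    have hVum : Measurable (Function.uncurry
        fun ξ η => (A₁.indicator 1 η : ℝ≥0∞) * g₂ (ξ - η) ^ (2:ℝ)) :=
      (((measurable_one.indicator hA₁).comp measurable_snd).mul
        ((hg₂m.comp (measurable_fst.sub measurable_snd)).pow_const _))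
    have hVm : Measurable V := hVum.lintegral_prod_right'
    have hcase2 : ∀ ξ ∈ A₀, K ξ ^ (2:ℝ) ≤ c₁ * V ξ := by
      intro ξ _
      have hpt : ∀ η, g₁ η * g₂ (ξ - η) = g₁ η * (A₁.indicator 1 η * g₂ (ξ - η)) := by
        intro η
        by_cases h1 : η ∈ A₁
        · simp [Set.indicator_apply, h1]
        · simp [hg₁supp _ h1]
      have hCS := lint_CS volume g₁ (fun η => A₁.indicator 1 η * g₂ (ξ - η))
        hg₁m.aemeasurable
        ((measurable_one.indicator hA₁).mul
          (hg₂m.comp (measurable_const.sub measurable_id))).aemeasurable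
      have h2 : (∫⁻ η, ((A₁.indicator 1 η : ℝ≥0∞) * g₂ (ξ - η)) ^ (2:ℝ)) = V ξ := by
        refine lintegral_congr fun η => ?_
        by_cases h : η ∈ A₁ <;>
          simp [Set.indicator_apply, h, ENNReal.mul_rpow_of_nonneg,
            ENNReal.zero_rpow_of_pos (by norm_num : (0:ℝ) < 2)]
      calc K ξ ^ (2:ℝ) = (∫⁻ η, g₁ η * (A₁.indicator 1 η * g₂ (ξ - η))) ^ (2:ℝ) := by
            rw [hKdef]; exact congrArg (· ^ (2:ℝ)) (lintegral_congr hpt)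
        _ ≤ c₁ * (∫⁻ η, ((A₁.indicator 1 η : ℝ≥0∞) * g₂ (ξ - η)) ^ (2:ℝ)) := hCS
        _ = c₁ * V ξ := by rw [h2]
    have hJ : ∫⁻ ξ, A₀.indicator 1 ξ * V ξ ≤ S₂ * c₂ := by
      have hstep1 : ∫⁻ ξ, A₀.indicator 1 ξ * V ξ
          = ∫⁻ ξ, ∫⁻ η, A₁.indicator 1 η * (A₀.indicator 1 ξ * g₂ (ξ - η) ^ (2:ℝ)) := by
        refine lintegral_congr fun ξ => ?_
        rw [hVdef]
        have hm : Measurable fun η : EuclideanSpace ℝ (Fin n) =>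
            (A₁.indicator 1 η : ℝ≥0∞) * g₂ (ξ - η) ^ (2:ℝ) :=
          (measurable_one.indicator hA₁).mul
            ((hg₂m.comp (measurable_const.sub measurable_id)).pow_const _)
        rw [← lintegral_const_mul _ hm]
        exact lintegral_congr fun η => by ring
      have humeas : Measurable (Function.uncurry fun ξ η =>
          (A₁.indicator 1 η : ℝ≥0∞) * (A₀.indicator 1 ξ * g₂ (ξ - η) ^ (2:ℝ))) :=
        ((measurable_one.indicator hA₁).comp measurable_snd).mul
          (((measurable_one.indicator hA₀).comp measurable_fst).mul
            ((hg₂m.comp (measurable_fst.sub measurable_snd)).pow_const _))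
      rw [hstep1, lintegral_lintegral_swap humeas.aemeasurable]
      have hstep2 : ∀ η, ∫⁻ ξ, A₁.indicator 1 η * (A₀.indicator 1 ξ * g₂ (ξ - η) ^ (2:ℝ))
          = A₁.indicator 1 η * ∫⁻ ζ, A₀.indicator 1 (η + ζ) * g₂ ζ ^ (2:ℝ) := by
        intro η
        have hm : Measurable fun ξ : EuclideanSpace ℝ (Fin n) =>
            (A₀.indicator 1 ξ : ℝ≥0∞) * g₂ (ξ - η) ^ (2:ℝ) :=
          (measurable_one.indicator hA₀).mul
            ((hg₂m.comp (measurable_id.sub_const η)).pow_const _)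
        rw [lintegral_const_mul _ hm]
        congr 1
        rw [← lintegral_add_left_eq_self
          (fun ξ => A₀.indicator 1 ξ * g₂ (ξ - η) ^ (2:ℝ)) η]
        exact lintegral_congr fun ζ => by rw [add_sub_cancel_left]
      rw [lintegral_congr hstep2]
      have hstep3 : ∫⁻ η, A₁.indicator 1 η * ∫⁻ ζ, A₀.indicator 1 (η + ζ) * g₂ ζ ^ (2:ℝ)
          = ∫⁻ ζ, (∫⁻ η, A₁.indicator 1 η * A₀.indicator 1 (η + ζ)) * g₂ ζ ^ (2:ℝ) := by
        have hm2 : Measurable (Function.uncurry fun η ζ =>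
            (A₁.indicator 1 η : ℝ≥0∞) * (A₀.indicator 1 (η + ζ) * g₂ ζ ^ (2:ℝ))) :=
          ((measurable_one.indicator hA₁).comp measurable_fst).mul
            (((measurable_one.indicator hA₀).comp (measurable_fst.add measurable_snd)).mul
              ((hg₂m.comp measurable_snd).pow_const _))
        have h1 : ∀ η, A₁.indicator 1 η * ∫⁻ ζ, A₀.indicator 1 (η + ζ) * g₂ ζ ^ (2:ℝ)
            = ∫⁻ ζ, A₁.indicator 1 η * (A₀.indicator 1 (η + ζ) * g₂ ζ ^ (2:ℝ)) := by
          intro η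
          have hm : Measurable fun ζ : EuclideanSpace ℝ (Fin n) =>
              (A₀.indicator 1 (η + ζ) : ℝ≥0∞) * g₂ ζ ^ (2:ℝ) :=
            ((measurable_one.indicator hA₀).comp
              (measurable_const.add measurable_id)).mul (hg₂m.pow_const _)
          rw [lintegral_const_mul _ hm]
        rw [lintegral_congr h1, lintegral_lintegral_swap hm2.aemeasurable]
        refine lintegral_congr fun ζ => ?_
        have hm : Measurable fun η : EuclideanSpace ℝ (Fin n) =>
            (A₁.indicator 1 η : ℝ≥0∞) * A₀.indicator 1 (η + ζ) :=
          (measurable_one.indicator hA₁).mul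
            ((measurable_one.indicator hA₀).comp (measurable_id.add_const _))
        rw [← lintegral_mul_const _ hm]
        exact lintegral_congr fun η => by ring
      rw [hstep3]
      have hfin : ∀ ζ, (∫⁻ η, (A₁.indicator 1 η : ℝ≥0∞) * A₀.indicator 1 (η + ζ))
          * g₂ ζ ^ (2:ℝ) ≤ S₂ * g₂ ζ ^ (2:ℝ) := by
        intro ζ
        by_cases hz : g₂ ζ = 0
        · simp [hz, ENNReal.zero_rpow_of_pos (by norm_num : (0:ℝ) < 2)]
        · have hζ : ζ ∈ A₂ := by
            by_contra hc; exact hz (hg₂supp _ hc)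
          refine mul_le_mul_left ?_ _
          have heq : ∫⁻ η, (A₁.indicator 1 η : ℝ≥0∞) * A₀.indicator 1 (η + ζ)
              = ∫⁻ ξ, A₀.indicator 1 ξ * A₁.indicator 1 (ξ - ζ) := by
            rw [← lintegral_add_left_eq_self
              (fun ξ => A₀.indicator 1 ξ * A₁.indicator 1 (ξ - ζ)) ζ]
            refine lintegral_congr fun η => ?_
            rw [add_sub_cancel_left, mul_comm, add_comm]
          rw [heq, hvol A₁ hA₁ ζ, hS₂def]
          exact le_iSup₂ (f := fun ξ _ => volume (A₀ ∩ ((fun η => ξ + η) '' A₁))) ζ hζ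
      calc ∫⁻ ζ, (∫⁻ η, (A₁.indicator 1 η : ℝ≥0∞) * A₀.indicator 1 (η + ζ)) * g₂ ζ ^ (2:ℝ)
          ≤ ∫⁻ ζ, S₂ * g₂ ζ ^ (2:ℝ) := lintegral_mono hfin
        _ = S₂ * c₂ := lintegral_const_mul _ (hg₂m.pow_const _)
    calc L ≤ ∫⁻ ξ, A₀.indicator 1 ξ * (c₁ * V ξ) := hLbound _ hcase2
      _ = c₁ * ∫⁻ ξ, A₀.indicator 1 ξ * V ξ := by
          rw [← lintegral_const_mul _ (f := fun ξ => A₀.indicator 1 ξ * V ξ) ((measurable_one.indicator hA₀).mul hVm)]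
          exact lintegral_congr fun ξ => by ring
      _ ≤ c₁ * (S₂ * c₂) := mul_le_mul_right hJ _
      _ = S₂ * (c₁ * c₂) := by ring
  ------------------------------------------------------------------
  -- Case 3
  ------------------------------------------------------------------
  have hL3 : L ≤ S₃ * (c₁ * c₂) := by
    set U : EuclideanSpace ℝ (Fin n) → ℝ≥0∞ :=
      fun ξ => ∫⁻ η, A₂.indicator 1 (ξ - η) * g₁ η ^ (2:ℝ) with hUdef
    have hUum : Measurable (Function.uncurry
        fun ξ η => (A₂.indicator 1 (ξ - η) : ℝ≥0∞) * g₁ η ^ (2:ℝ)) :=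
      ((measurable_one.indicator hA₂).comp (measurable_fst.sub measurable_snd)).mul
        ((hg₁m.comp measurable_snd).pow_const _)
    have hUm : Measurable U := hUum.lintegral_prod_right'
    have hcase3 : ∀ ξ ∈ A₀, K ξ ^ (2:ℝ) ≤ U ξ * c₂ := by
      intro ξ _
      have hpt : ∀ η, g₁ η * g₂ (ξ - η)
          = (A₂.indicator 1 (ξ - η) * g₁ η) * g₂ (ξ - η) := by
        intro η
        by_cases h2 : ξ - η ∈ A₂
        · simp [Set.indicator_apply, h2]
        · simp [hg₂supp _ h2]
      have hCS := lint_CS volume (fun η => A₂.indicator 1 (ξ - η) * g₁ η)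
        (fun η => g₂ (ξ - η))
        (((measurable_one.indicator hA₂).comp (measurable_const.sub measurable_id)).mul
          hg₁m).aemeasurable
        (hg₂m.comp (measurable_const.sub measurable_id)).aemeasurable
      have h1 : (∫⁻ η, ((A₂.indicator 1 (ξ - η) : ℝ≥0∞) * g₁ η) ^ (2:ℝ)) = U ξ := by
        refine lintegral_congr fun η => ?_
        by_cases h : ξ - η ∈ A₂ <;>
          simp [Set.indicator_apply, h, ENNReal.mul_rpow_of_nonneg,
            ENNReal.zero_rpow_of_pos (by norm_num : (0:ℝ) < 2)]
      have h2 : (∫⁻ η, g₂ (ξ - η) ^ (2:ℝ)) = c₂ :=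
        lint_sub_left (fun x => g₂ x ^ (2:ℝ)) ξ
      calc K ξ ^ (2:ℝ)
          = (∫⁻ η, (A₂.indicator 1 (ξ - η) * g₁ η) * g₂ (ξ - η)) ^ (2:ℝ) := by
            rw [hKdef]; exact congrArg (· ^ (2:ℝ)) (lintegral_congr hpt)
        _ ≤ (∫⁻ η, ((A₂.indicator 1 (ξ - η) : ℝ≥0∞) * g₁ η) ^ (2:ℝ)) *
              (∫⁻ η, g₂ (ξ - η) ^ (2:ℝ)) := hCS
        _ = U ξ * c₂ := by rw [h1, h2]
    have hJ : ∫⁻ ξ, A₀.indicator 1 ξ * U ξ ≤ S₃ * c₁ := by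
      have hstep1 : ∫⁻ ξ, A₀.indicator 1 ξ * U ξ
          = ∫⁻ ξ, ∫⁻ η, (A₀.indicator 1 ξ * A₂.indicator 1 (ξ - η)) * g₁ η ^ (2:ℝ) := by
        refine lintegral_congr fun ξ => ?_
        rw [hUdef]
        have hm : Measurable fun η : EuclideanSpace ℝ (Fin n) =>
            (A₂.indicator 1 (ξ - η) : ℝ≥0∞) * g₁ η ^ (2:ℝ) :=
          ((measurable_one.indicator hA₂).comp
            (measurable_const.sub measurable_id)).mul (hg₁m.pow_const _)
        rw [← lintegral_const_mul _ hm]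
        exact lintegral_congr fun η => by ring
      have humeas : Measurable (Function.uncurry fun ξ η =>
          ((A₀.indicator 1 ξ : ℝ≥0∞) * A₂.indicator 1 (ξ - η)) * g₁ η ^ (2:ℝ)) :=
        (((measurable_one.indicator hA₀).comp measurable_fst).mul
          ((measurable_one.indicator hA₂).comp (measurable_fst.sub measurable_snd))).mul
          ((hg₁m.comp measurable_snd).pow_const _)
      rw [hstep1, lintegral_lintegral_swap humeas.aemeasurable]
      have hstep2 : ∀ η, ∫⁻ ξ, ((A₀.indicator 1 ξ : ℝ≥0∞) * A₂.indicator 1 (ξ - η))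
          * g₁ η ^ (2:ℝ)
          = (∫⁻ ξ, (A₀.indicator 1 ξ : ℝ≥0∞) * A₂.indicator 1 (ξ - η)) * g₁ η ^ (2:ℝ) := by
        intro η
        have hm : Measurable fun ξ : EuclideanSpace ℝ (Fin n) =>
            (A₀.indicator 1 ξ : ℝ≥0∞) * A₂.indicator 1 (ξ - η) :=
          (measurable_one.indicator hA₀).mul
            ((measurable_one.indicator hA₂).comp (measurable_id.sub_const η))
        rw [lintegral_mul_const _ hm]
      rw [lintegral_congr hstep2]
      have hfin : ∀ η, (∫⁻ ξ, (A₀.indicator 1 ξ : ℝ≥0∞) * A₂.indicator 1 (ξ - η))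
          * g₁ η ^ (2:ℝ) ≤ S₃ * g₁ η ^ (2:ℝ) := by
        intro η
        by_cases hz : g₁ η = 0
        · simp [hz, ENNReal.zero_rpow_of_pos (by norm_num : (0:ℝ) < 2)]
        · have hη : η ∈ A₁ := by
            by_contra hc; exact hz (hg₁supp _ hc)
          refine mul_le_mul_left ?_ _
          rw [hvol A₂ hA₂ η, hS₃def]
          exact le_iSup₂ (f := fun ξ _ => volume (A₀ ∩ ((fun η => ξ + η) '' A₂))) η hη
      calc ∫⁻ η, (∫⁻ ξ, (A₀.indicator 1 ξ : ℝ≥0∞) * A₂.indicator 1 (ξ - η)) * g₁ η ^ (2:ℝ)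
          ≤ ∫⁻ η, S₃ * g₁ η ^ (2:ℝ) := lintegral_mono hfin
        _ = S₃ * c₁ := lintegral_const_mul _ (hg₁m.pow_const _)
    calc L ≤ ∫⁻ ξ, A₀.indicator 1 ξ * (U ξ * c₂) := hLbound _ hcase3
      _ = c₂ * ∫⁻ ξ, A₀.indicator 1 ξ * U ξ := by
          rw [← lintegral_const_mul _ (f := fun ξ => A₀.indicator 1 ξ * U ξ) ((measurable_one.indicator hA₀).mul hUm)]
          exact lintegral_congr fun ξ => by ring
      _ ≤ c₂ * (S₃ * c₁) := mul_le_mul_right hJ _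
      _ = S₃ * (c₁ * c₂) := by ring
  ------------------------------------------------------------------
  -- combine
  ------------------------------------------------------------------
  have hM123 : M = S₁ ∨ M = S₂ ∨ M = S₃ := by
    rw [hM]
    rcases min_cases (min S₁ S₂) S₃ with h | h
    · rcases min_cases S₁ S₂ with h' | h'
      · left; rw [h.1, h'.1]
      · right; left; rw [h.1, h'.1]
    · right; right; rw [h.1]
  have hLM : L ≤ M * (c₁ * c₂) := by
    rcases hM123 with h | h | h <;> rw [h] <;> assumption
  calc eLpNorm (Set.indicator A₀ (fun ξ => ∫ η, F₁ η * F₂ (ξ - η))) 2 volume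
      = (∫⁻ ξ, (‖(A₀.indicator (fun ξ => ∫ η, F₁ η * F₂ (ξ - η)) ξ)‖₊ : ℝ≥0∞) ^ (2:ℝ))
          ^ ((1:ℝ)/2) := eLp_eq _ _
    _ ≤ L ^ ((1:ℝ)/2) := by
        refine ENNReal.rpow_le_rpow (lintegral_mono fun ξ => ?_) (by norm_num)
        exact ENNReal.rpow_le_rpow (hK ξ) (by norm_num)
    _ ≤ (M * (c₁ * c₂)) ^ ((1:ℝ)/2) := ENNReal.rpow_le_rpow hLM (by norm_num)
    _ = M ^ ((1:ℝ)/2) * (c₁ ^ ((1:ℝ)/2) * c₂ ^ ((1:ℝ)/2)) := by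
        rw [ENNReal.mul_rpow_of_nonneg _ _ (by norm_num),
          ENNReal.mul_rpow_of_nonneg _ _ (by norm_num)]
    _ = M ^ ((1:ℝ)/2) * eLpNorm F₁ 2 volume * eLpNorm F₂ 2 volume := by
        rw [hn₁, hn₂, mul_assoc]
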